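/- arXiv:1909.01737 — 4 statements merged into one kernel-verified Lean document; each statement's English description precedes it below -/
import Mathlib

section
/- Let G act on the connected wsc Ω, and suppose each local space Vᵢ is a (complex, associative) algebra, so that V = V₀ ⊗ ⋯ ⊗ Vₙ is an algebra with componentwise multiplication. Then rank_{(Ω,G)}(vw) ≤ rank_{(Ω,G)}(v) · rank_{(Ω,G)}(w) for all v, w ∈ V. -/
open PiTensorProduct
open scoped TensorProduct

/-- The linear action of `g ∈ G` on `V = W ⊗ ⋯ ⊗ W` (n+1 factors) permuting the tensor
factors: on elementary tensors, the factor at site `g • i` of `g • v` is the factor of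
`v` at site `i`. -/
noncomputable def permuteFactors {n : ℕ} {G : Type} [Group G]
    [MulAction G (Fin (n+1))] {W : Type} [AddCommGroup W] [Module ℂ W] (g : G) :
    (⨂[ℂ] _ : Fin (n+1), W) ≃ₗ[ℂ] ⨂[ℂ] _ : Fin (n+1), W :=
  PiTensorProduct.reindex ℂ (fun _ : Fin (n+1) => W) (MulAction.toPerm g)

/-- An `(Ω,G)`-decomposition of `v` with index set `Fin s`. Here `F` is the multiset of
facets of the weighted simplicial complex `Ω`, `mem f i` means vertex `i` lies in the
facet `f`, and the local tensors `loc i : I^{F̃} → W` are required to (a) depend only on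
the restriction of the index function to the facets containing `i`, (b) satisfy the
equivariance condition `v⁽ⁱ⁾_β = v^{[g•i]}_{ᵍβ}`, and (c) sum to `v`. -/
def IsOGDecomposition {n : ℕ} {F : Type} [Fintype F] [DecidableEq F]
    (G : Type) [Group G] [MulAction G (Fin (n+1))] [MulAction G F]
    (mem : F → Fin (n+1) → Prop)
    {W : Type} [AddCommGroup W] [Module ℂ W]
    (s : ℕ) (loc : Fin (n+1) → (F → Fin s) → W)
    (v : ⨂[ℂ] _ : Fin (n+1), W) : Prop :=
  (∀ (i : Fin (n+1)) (α α' : F → Fin s),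
      (∀ f : F, mem f i → α f = α' f) → loc i α = loc i α') ∧
  (∀ (g : G) (i : Fin (n+1)) (α : F → Fin s),
      loc (g • i) (fun f => α (g⁻¹ • f)) = loc i α) ∧
  v = ∑ α : F → Fin s, ⨂ₜ[ℂ] i, loc i α

/-- The `(Ω,G)`-rank of `v`: the smallest cardinality of an index set over which `v`
admits an `(Ω,G)`-decomposition (`∞` if no such decomposition exists). -/
noncomputable def ogRank {n : ℕ} {F : Type} [Fintype F] [DecidableEq F]
    (G : Type) [Group G] [MulAction G (Fin (n+1))] [MulAction G F]
    (mem : F → Fin (n+1) → Prop)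
    {W : Type} [AddCommGroup W] [Module ℂ W]
    (v : ⨂[ℂ] _ : Fin (n+1), W) : ℕ∞ :=
  sInf {r : ℕ∞ | ∃ s : ℕ, r = (s : ℕ∞) ∧
    ∃ loc : Fin (n+1) → (F → Fin s) → W, IsOGDecomposition G mem s loc v}


section Aux

variable {n : ℕ} {F : Type} [Fintype F] [DecidableEq F]
    (G : Type) [Group G] [MulAction G (Fin (n+1))] [MulAction G F]
    (mem : F → Fin (n+1) → Prop)

/-- If `F` is nonempty, the zero tensor has a decomposition of size 0. -/
lemma ogRank_zero_of {W : Type} [AddCommGroup W] [Module ℂ W] (hF : Nonempty F) :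
    ogRank G mem (0 : ⨂[ℂ] _ : Fin (n+1), W) = 0 := by
  have hE : IsEmpty (F → Fin 0) := by
    obtain ⟨f⟩ := hF
    exact ⟨fun α => (α f).elim0⟩
  refine le_antisymm (sInf_le ⟨0, rfl, fun _ α => hE.elim α, ?_, ?_, ?_⟩) zero_le
  · exact fun _ α => hE.elim α
  · exact fun _ _ α => hE.elim α
  · rw [Finset.sum_of_isEmpty]

lemma eq_zero_of_ogRank_zero {W : Type} [AddCommGroup W] [Module ℂ W] (hF : Nonempty F)
    (v : ⨂[ℂ] _ : Fin (n+1), W) (h : ogRank G mem v = 0) : v = 0 := by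
  have hne : {r : ℕ∞ | ∃ s : ℕ, r = (s : ℕ∞) ∧
      ∃ loc : Fin (n+1) → (F → Fin s) → W, IsOGDecomposition G mem s loc v}.Nonempty := by
    by_contra hc
    rw [Set.not_nonempty_iff_eq_empty] at hc
    rw [ogRank, hc, sInf_empty] at h
    exact absurd h (by simp)
  have hmem := csInf_mem hne
  rw [show sInf _ = ogRank G mem v from rfl, h] at hmem
  obtain ⟨s, hs, loc, -, -, hsum⟩ := hmem
  have hs0 : s = 0 := by exact_mod_cast hs.symm
  subst hs0
  have hE : IsEmpty (F → Fin 0) := by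
    obtain ⟨f⟩ := hF
    exact ⟨fun α => (α f).elim0⟩
  rw [hsum, Finset.sum_of_isEmpty]

/-- The product construction: multiply local tensors pointwise. -/
lemma isOGDecomposition_mul {W : Type} [Ring W] [Algebra ℂ W]
    {s t : ℕ} {locV : Fin (n+1) → (F → Fin s) → W} {locW : Fin (n+1) → (F → Fin t) → W}
    {v w : ⨂[ℂ] _ : Fin (n+1), W}
    (hv : IsOGDecomposition G mem s locV v) (hw : IsOGDecomposition G mem t locW w) :
    IsOGDecomposition G mem (s * t)
      (fun i α => locV i (fun f => (finProdFinEquiv.symm (α f)).1) *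
                  locW i (fun f => (finProdFinEquiv.symm (α f)).2)) (v * w) := by
  obtain ⟨hv1, hv2, hv3⟩ := hv
  obtain ⟨hw1, hw2, hw3⟩ := hw
  refine ⟨?_, ?_, ?_⟩
  · intro i α α' h
    exact congrArg₂ (· * ·)
      (hv1 i _ (fun f => (finProdFinEquiv.symm (α' f)).1) (fun f hf => by rw [h f hf]))
      (hw1 i _ (fun f => (finProdFinEquiv.symm (α' f)).2) (fun f hf => by rw [h f hf]))
  · intro g i α
    exact congrArg₂ (· * ·)
      (hv2 g i (fun f => (finProdFinEquiv.symm (α f)).1))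
      (hw2 g i (fun f => (finProdFinEquiv.symm (α f)).2))
  · rw [hv3, hw3, Finset.sum_mul_sum]
    let e : (F → Fin (s * t)) ≃ (F → Fin s) × (F → Fin t) :=
      { toFun := fun γ => (fun f => (finProdFinEquiv.symm (γ f)).1,
          fun f => (finProdFinEquiv.symm (γ f)).2)
        invFun := fun p f => finProdFinEquiv (p.1 f, p.2 f)
        left_inv := fun γ => by
          funext f; exact finProdFinEquiv.apply_symm_apply (γ f)
        right_inv := fun p => by
          refine Prod.ext (funext fun f => ?_) (funext fun f => ?_)
          · exact congrArg Prod.fst (finProdFinEquiv.symm_apply_apply (p.1 f, p.2 f))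
          · exact congrArg Prod.snd (finProdFinEquiv.symm_apply_apply (p.1 f, p.2 f)) }
    rw [← Fintype.sum_prod_type']
    refine (Fintype.sum_equiv e _ _ fun γ => ?_).symm
    conv_rhs => rw [PiTensorProduct.tprod_mul_tprod]
    rfl

end Aux

/-- Multiplicativity of the `(Ω,G)`-rank: if each local space is a complex associative
algebra `W`, so that `V = W ⊗ ⋯ ⊗ W` is an algebra with componentwise multiplication,
then `rank_{(Ω,G)}(v * w) ≤ rank_{(Ω,G)}(v) * rank_{(Ω,G)}(w)`. -/


theorem ogRank_mul_le
    {n : ℕ} {F : Type} [Fintype F] [DecidableEq F]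
    (G : Type) [Group G] [MulAction G (Fin (n+1))] [MulAction G F]
    (mem : F → Fin (n+1) → Prop)
    (hcompat : ∀ (g : G) (f : F) (i : Fin (n+1)), mem f i → mem (g • f) (g • i))
    (hfacet : ∀ f : F, ∃ i, mem f i)
    (hcover : ∀ i : Fin (n+1), ∃ f : F, mem f i)
    (hconn : ∀ i j : Fin (n+1),
      Relation.ReflTransGen (fun a b => ∃ f : F, mem f a ∧ mem f b) i j)
    {W : Type} [Ring W] [Algebra ℂ W]
    (v w : ⨂[ℂ] _ : Fin (n+1), W) :
    ogRank G mem (v * w) ≤ ogRank G mem v * ogRank G mem w := by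
  classical
  have hF : Nonempty F := (hcover 0).elim fun f _ => ⟨f⟩
  by_cases hv0 : ogRank G mem v = 0
  · have : v = 0 := eq_zero_of_ogRank_zero G mem hF v hv0
    rw [this, zero_mul, ogRank_zero_of G mem hF]
    exact zero_le
  by_cases hw0 : ogRank G mem w = 0
  · have : w = 0 := eq_zero_of_ogRank_zero G mem hF w hw0
    rw [this, mul_zero, ogRank_zero_of G mem hF]
    exact zero_le
  by_cases hvne : {r : ℕ∞ | ∃ s : ℕ, r = (s : ℕ∞) ∧
      ∃ loc : Fin (n+1) → (F → Fin s) → W, IsOGDecomposition G mem s loc v}.Nonempty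
  · by_cases hwne : {r : ℕ∞ | ∃ s : ℕ, r = (s : ℕ∞) ∧
        ∃ loc : Fin (n+1) → (F → Fin s) → W, IsOGDecomposition G mem s loc w}.Nonempty
    · obtain ⟨s, hs, locV, hdv⟩ := csInf_mem hvne
      obtain ⟨t, ht, locW, hdw⟩ := csInf_mem hwne
      have key := isOGDecomposition_mul G mem hdv hdw
      have : ogRank G mem (v * w) ≤ ((s * t : ℕ) : ℕ∞) :=
        sInf_le ⟨s * t, rfl, _, key⟩
      calc ogRank G mem (v * w) ≤ ((s * t : ℕ) : ℕ∞) := this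
        _ = (s : ℕ∞) * (t : ℕ∞) := by push_cast; rfl
        _ = ogRank G mem v * ogRank G mem w := by
            rw [show ogRank G mem v = sInf _ from rfl, show ogRank G mem w = sInf _ from rfl,
              ← hs, ← ht]
    · have : ogRank G mem w = ⊤ := by
        rw [ogRank, Set.not_nonempty_iff_eq_empty.mp hwne, sInf_empty]
      rw [this, ENat.mul_top hv0]
      exact le_top
  · have : ogRank G mem v = ⊤ := by
      rw [ogRank, Set.not_nonempty_iff_eq_empty.mp hvne, sInf_empty]
    rw [this, ENat.top_mul hw0]
    exact le_top
end

section
/- Let G be a finite group acting freely on the connected wsc Ω, and let H ⊴ G be a normal subgroup. Then for every G-invariant v ∈ V, rank_{(Ω,G)}(v) ≤ |G/H| · rank_{(Ω,H)}(v). In particular rank_{(Ω,G)}(v) ≤ |G| · rank_Ω(v). -/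
open PiTensorProduct
open scoped TensorProduct

/-- An `(Ω,H)`-decomposition of `v` for a subgroup `H` of `G`, with index set `Fin s`:
the local tensors depend only on the restriction of the index function to the facets
containing the given vertex, are equivariant for all elements of `H`, and sum to `v`.
For `H = ⊤` this is an `(Ω,G)`-decomposition; for `H = ⊥` it is an `Ω`-decomposition. -/
def IsOGSubDecomposition {n : ℕ} {F : Type} [Fintype F] [DecidableEq F]
    {G : Type} [Group G] [MulAction G (Fin (n+1))] [MulAction G F]
    (H : Subgroup G) (mem : F → Fin (n+1) → Prop)
    {W : Type} [AddCommGroup W] [Module ℂ W]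
    (s : ℕ) (loc : Fin (n+1) → (F → Fin s) → W)
    (v : ⨂[ℂ] _ : Fin (n+1), W) : Prop :=
  (∀ (i : Fin (n+1)) (α α' : F → Fin s),
      (∀ f : F, mem f i → α f = α' f) → loc i α = loc i α') ∧
  (∀ g ∈ H, ∀ (i : Fin (n+1)) (α : F → Fin s),
      loc (g • i) (fun f => α (g⁻¹ • f)) = loc i α) ∧
  v = ∑ α : F → Fin s, ⨂ₜ[ℂ] i, loc i α

/-- The `(Ω,H)`-rank of `v`, for a subgroup `H` of `G`: the smallest cardinality of an
index set over which `v` admits an `(Ω,H)`-decomposition (`∞` if none exists). -/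
noncomputable def ogSubRank {n : ℕ} {F : Type} [Fintype F] [DecidableEq F]
    {G : Type} [Group G] [MulAction G (Fin (n+1))] [MulAction G F]
    (H : Subgroup G) (mem : F → Fin (n+1) → Prop)
    {W : Type} [AddCommGroup W] [Module ℂ W]
    (v : ⨂[ℂ] _ : Fin (n+1), W) : ℕ∞ :=
  sInf {r : ℕ∞ | ∃ s : ℕ, r = (s : ℕ∞) ∧
    ∃ loc : Fin (n+1) → (F → Fin s) → W, IsOGSubDecomposition H mem s loc v}
theorem ogSubRank_top_le_aux {n : ℕ} {F : Type} [Fintype F] [DecidableEq F]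
    {G : Type} [Group G] [Fintype G] [MulAction G (Fin (n+1))] [MulAction G F]
    (mem : F → Fin (n+1) → Prop)
    (hcompat : ∀ (g : G) (f : F) (i : Fin (n+1)), mem f i → mem (g • f) (g • i))
    (hfacet : ∀ f : F, ∃ i, mem f i)
    (hcover : ∀ i : Fin (n+1), ∃ f : F, mem f i)
    (hconn : ∀ i j : Fin (n+1),
      Relation.ReflTransGen (fun a b => ∃ f : F, mem f a ∧ mem f b) i j)
    (hfree : ∀ (f : F) (g : G), g • f = f → g = 1)
    (H : Subgroup G) (hnormal : H.Normal)
    {W : Type} [AddCommGroup W] [Module ℂ W]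
    (v : ⨂[ℂ] _ : Fin (n+1), W)
    (hinv : ∀ g : G, permuteFactors g v = v) :
    ogSubRank (⊤ : Subgroup G) mem v ≤ (Nat.card (G ⧸ H) : ℕ∞) * ogSubRank H mem v := by
  classical
  by_cases hne : {r : ℕ∞ | ∃ s : ℕ, r = (s : ℕ∞) ∧
      ∃ loc : Fin (n+1) → (F → Fin s) → W, IsOGSubDecomposition H mem s loc v}.Nonempty
  swap
  · have hT : ogSubRank H mem v = ⊤ := by
      unfold ogSubRank
      rw [Set.not_nonempty_iff_eq_empty.mp hne, sInf_empty]
    rw [hT, ENat.mul_top]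
    · exact le_top
    · simp only [ne_eq, Nat.cast_eq_zero]
      exact (Nat.card_pos (α := G ⧸ H)).ne'
  have hm := csInf_mem hne
  obtain ⟨s, hs, loc, hloc, hequiv, hsum⟩ := hm
  -- setup
  letI : Fintype (G ⧸ H) := Fintype.ofFinite _
  have hπinv : ∀ g : G, (QuotientGroup.mk g⁻¹ : G ⧸ H) = (QuotientGroup.mk g)⁻¹ :=
    fun _ => rfl
  set σ : G ⧸ H → G := Quotient.out with hσdef
  have hσ : ∀ q : G ⧸ H, (QuotientGroup.mk (σ q) : G ⧸ H) = q :=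
    fun q => QuotientGroup.out_eq' q
  -- orbit section on facets
  set rep : F → F := fun f => Quotient.out (Quotient.mk (MulAction.orbitRel G F) f) with hrepdef
  have hrepex : ∀ f : F, ∃ g : G, g • f = rep f := by
    intro f
    have h1 : Quotient.mk (MulAction.orbitRel G F) (rep f) =
        Quotient.mk (MulAction.orbitRel G F) f := Quotient.out_eq _
    have h2 := Quotient.exact h1
    have h2' : rep f ∈ MulAction.orbit G f := h2
    exact MulAction.mem_orbit_iff.mp h2'
  set γ : F → G := fun f => (hrepex f).choose with hγdef
  have hγ : ∀ f, γ f • f = rep f := fun f => (hrepex f).choose_spec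
  have hrepinv : ∀ (g : G) (f : F), rep (g • f) = rep f := by
    intro g f
    simp only [hrepdef]
    congr 1
    exact Quotient.sound (MulAction.mem_orbit_iff.mpr ⟨g, rfl⟩)
  have hγcoc : ∀ (g : G) (f : F), γ (g • f) = γ f * g⁻¹ := by
    intro g f
    have h1 : γ (g • f) • (g • f) = γ f • f := by rw [hγ, hγ, hrepinv]
    have h2 : (γ f * g⁻¹) • (g • f) = γ f • f := by
      rw [mul_smul, inv_smul_smul]
    have h3 : ((γ f * g⁻¹)⁻¹ * γ (g • f)) • (g • f) = g • f := by
      rw [mul_smul, h1, ← h2, inv_smul_smul]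
    have h4 := hfree _ _ h3
    have h5 := inv_mul_eq_one.mp h4
    exact h5.symm
  set lam : F → G ⧸ H := fun f => (QuotientGroup.mk (γ f) : G ⧸ H)⁻¹ with hlamdef
  have hlam : ∀ (g : G) (f : F), lam (g • f) = QuotientGroup.mk g * lam f := by
    intro g f
    simp only [hlamdef, hγcoc g f, QuotientGroup.mk_mul, hπinv, mul_inv_rev, inv_inv]
  -- the root scalar
  have hcard0 : (Nat.card (G ⧸ H) : ℂ) ≠ 0 := by
    exact_mod_cast (Nat.card_pos (α := G ⧸ H)).ne'
  obtain ⟨c, hc⟩ := IsAlgClosed.exists_pow_nat_eq ((Nat.card (G ⧸ H) : ℂ))⁻¹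
    (n := n+1) (Nat.succ_pos n)
  -- the index equivalence
  set t : ℕ := Nat.card (G ⧸ H) * s with htdef
  have hcardeq : Fintype.card (Fin s × (G ⧸ H)) = t := by
    simp [htdef, Nat.card_eq_fintype_card, mul_comm]
  set e : Fin s × (G ⧸ H) ≃ Fin t := Fintype.equivFinOfCardEq hcardeq with hedef
  set A : (F → Fin t) → F → Fin s := fun β f => (e.symm (β f)).1 with hAdef
  set Ql : (F → Fin t) → F → G ⧸ H := fun β f => lam f * (e.symm (β f)).2 with hQldef
  set f0 : Fin (n+1) → F := fun i => (hcover i).choose with hf0def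
  have hf0 : ∀ i, mem (f0 i) i := fun i => (hcover i).choose_spec
  set Loc : Fin (n+1) → (F → Fin t) → W := fun i β =>
    if h : ∀ f, mem f i → Ql β f = Ql β (f0 i) then
      c • loc ((σ (Ql β (f0 i)))⁻¹ • i) (fun f => A β (σ (Ql β (f0 i)) • f))
    else 0 with hLocdef
  have key : ogSubRank (⊤ : Subgroup G) mem v ≤ ((t : ℕ) : ℕ∞) := by
    refine sInf_le ⟨t, rfl, Loc, ?_, ?_, ?_⟩
    · -- locality
      intro i α α' hag
      have hQ : ∀ f, mem f i → Ql α f = Ql α' f := by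
        intro f hf; simp only [hQldef, hag f hf]
      simp only [hLocdef]
      by_cases h : ∀ f, mem f i → Ql α f = Ql α (f0 i)
      · have h' : ∀ f, mem f i → Ql α' f = Ql α' (f0 i) := by
          intro f hf
          rw [← hQ f hf, ← hQ _ (hf0 i)]; exact h f hf
        rw [dif_pos h, dif_pos h', ← hQ _ (hf0 i)]
        congr 1
        apply hloc
        intro f hf
        have hmem : mem (σ (Ql α (f0 i)) • f) i := by
          have h5 := hcompat (σ (Ql α (f0 i))) f _ hf
          rwa [smul_inv_smul] at h5
        simp only [hAdef, hag _ hmem]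
      · have h' : ¬ ∀ f, mem f i → Ql α' f = Ql α' (f0 i) := by
          intro h'
          exact h (fun f hf => by rw [hQ f hf, hQ _ (hf0 i)]; exact h' f hf)
        rw [dif_neg h, dif_neg h']
    · -- equivariance
      intro g₀ _ i β
      simp only [hLocdef]
      have hQl' : ∀ f, Ql (fun f => β (g₀⁻¹ • f)) f
          = QuotientGroup.mk g₀ * Ql β (g₀⁻¹ • f) := by
        intro f
        simp only [hQldef]
        have h1 : lam (g₀⁻¹ • f) = (QuotientGroup.mk g₀ : G ⧸ H)⁻¹ * lam f := by
          rw [hlam g₀⁻¹ f, hπinv]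
        rw [h1]
        group
      have hm1 : ∀ f, mem f (g₀ • i) → mem (g₀⁻¹ • f) i := by
        intro f hf
        have h5 := hcompat g₀⁻¹ f _ hf
        rwa [inv_smul_smul] at h5
      have hm2 : mem (g₀⁻¹ • f0 (g₀ • i)) i := hm1 _ (hf0 _)
      by_cases h : ∀ f, mem f i → Ql β f = Ql β (f0 i)
      · have h' : ∀ f, mem f (g₀ • i) → Ql (fun f => β (g₀⁻¹ • f)) f
            = Ql (fun f => β (g₀⁻¹ • f)) (f0 (g₀ • i)) := by
          intro f hf
          rw [hQl' f, hQl' (f0 (g₀ • i)), h _ (hm1 f hf), h _ hm2]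
        rw [dif_pos h', dif_pos h]
        have hq' : Ql (fun f => β (g₀⁻¹ • f)) (f0 (g₀ • i))
            = QuotientGroup.mk g₀ * Ql β (f0 i) := by
          rw [hQl', h _ hm2]
        rw [hq']
        set q := Ql β (f0 i) with hqdef
        set k : G := (σ (QuotientGroup.mk g₀ * q))⁻¹ * g₀ * σ q with hkdef
        have hk : k ∈ H := by
          rw [← QuotientGroup.eq_one_iff]
          have e1 : (QuotientGroup.mk k : G ⧸ H)
              = (QuotientGroup.mk (σ (QuotientGroup.mk g₀ * q)) : G ⧸ H)⁻¹
                * QuotientGroup.mk g₀ * QuotientGroup.mk (σ q) := by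
            rw [hkdef]
            simp [QuotientGroup.mk_mul, QuotientGroup.mk_inv]
          rw [e1, hσ, hσ]
          group
        have h2 := hequiv _ hk ((σ q)⁻¹ • i) (fun f => A β (σ q • f))
        have hidx : (σ (QuotientGroup.mk g₀ * q))⁻¹ • (g₀ • i) = k • ((σ q)⁻¹ • i) := by
          rw [smul_smul, smul_smul]
          have harg : (σ (QuotientGroup.mk g₀ * q))⁻¹ * g₀ = k * (σ q)⁻¹ := by
            rw [hkdef]; group
          rw [harg]
        have hfun : (fun f => A (fun f' => β (g₀⁻¹ • f')) (σ (QuotientGroup.mk g₀ * q) • f))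
            = (fun f => A β (σ q • (k⁻¹ • f))) := by
          funext f
          show A β (g₀⁻¹ • σ (QuotientGroup.mk g₀ * q) • f) = A β (σ q • k⁻¹ • f)
          rw [smul_smul, smul_smul]
          have harg : g₀⁻¹ * σ (QuotientGroup.mk g₀ * q) = σ q * k⁻¹ := by
            rw [hkdef]; group
          rw [harg]
        rw [hidx, hfun, h2]
      · have h' : ¬ ∀ f, mem f (g₀ • i) → Ql (fun f => β (g₀⁻¹ • f)) f
            = Ql (fun f => β (g₀⁻¹ • f)) (f0 (g₀ • i)) := by
          intro h'
          apply h
          intro f hf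
          have hmem : mem (g₀ • f) (g₀ • i) := hcompat g₀ f i hf
          have e1 := h' _ hmem
          rw [hQl' _, hQl' _, inv_smul_smul] at e1
          have e2 := mul_left_cancel e1
          have hmem0 : mem (g₀ • f0 i) (g₀ • i) := hcompat g₀ _ i (hf0 i)
          have e3 := h' _ hmem0
          rw [hQl' _, hQl' _, inv_smul_smul] at e3
          have e4 := mul_left_cancel e3
          rw [e2, ← e4]
        rw [dif_neg h', dif_neg h]
    · -- sum
      have hA2 : ∀ g : G, ∑ α : F → Fin s,
          (⨂ₜ[ℂ] i, loc (g⁻¹ • i) (fun f => α (g • f))) = v := by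
        intro g
        have hperm : permuteFactors (n := n) (G := G) g v
            = ∑ α : F → Fin s, ⨂ₜ[ℂ] i, loc (g⁻¹ • i) α := by
          conv_lhs => rw [hsum]
          rw [map_sum]
          refine Finset.sum_congr rfl fun α _ => ?_
          show (PiTensorProduct.reindex ℂ (fun _ : Fin (n+1) => W) (MulAction.toPerm g))
              ((PiTensorProduct.tprod ℂ) fun i => loc i α) = _
          rw [PiTensorProduct.reindex_tprod]
          simp only [MulAction.toPerm_symm_apply]
        have hES : ∑ α : F → Fin s, (⨂ₜ[ℂ] i, loc (g⁻¹ • i) (fun f => α (g • f)))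
            = ∑ α : F → Fin s, ⨂ₜ[ℂ] i, loc (g⁻¹ • i) α := by
          refine Fintype.sum_equiv
            ⟨fun (α : F → Fin s) => fun f => α (g • f),
             fun α => fun f => α (g⁻¹ • f), ?_, ?_⟩ _ _ (fun α => rfl)
          · intro α; funext f; simp [smul_inv_smul]
          · intro α; funext f; simp [inv_smul_smul]
        rw [hES, ← hperm, hinv g]
      set S : Finset (F → Fin t) := Finset.univ.filter (fun β => ∀ f, Ql β f = Ql β (f0 0))
        with hSdef
      have hvan : ∀ β ∈ Finset.univ, β ∉ S →
          ((⨂ₜ[ℂ] i, Loc i β) : ⨂[ℂ] _ : Fin (n+1), W) = 0 := by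
        intro β _ hβ
        have hβ' : ¬ ∀ f, Ql β f = Ql β (f0 0) := by
          intro hcon
          exact hβ (Finset.mem_filter.mpr ⟨Finset.mem_univ _, hcon⟩)
        have hnc : ¬ ∀ i : Fin (n+1), ∀ f, mem f i → Ql β f = Ql β (f0 i) := by
          intro hall
          apply hβ'
          have hval : ∀ i j : Fin (n+1), Ql β (f0 i) = Ql β (f0 j) := by
            intro i j
            induction hconn i j with
            | refl => rfl
            | tail hab hbc ih =>
              obtain ⟨f', h1, h2⟩ := hbc
              rw [ih, ← hall _ f' h1, hall _ f' h2]
          intro f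
          obtain ⟨j, hj⟩ := hfacet f
          rw [hall j f hj, hval j 0]
        rw [not_forall] at hnc
        obtain ⟨i, hi⟩ := hnc
        have hzero : Loc i β = 0 := by
          simp only [hLocdef]
          exact dif_neg hi
        exact MultilinearMap.map_coord_zero (PiTensorProduct.tprod ℂ) i hzero
      have hstep1 : ∑ β ∈ S, ((⨂ₜ[ℂ] i, Loc i β) : ⨂[ℂ] _ : Fin (n+1), W)
          = ∑ β : F → Fin t, ⨂ₜ[ℂ] i, Loc i β :=
        Finset.sum_subset (Finset.subset_univ S) hvan
      have hstep2 : ∑ p : (G ⧸ H) × (F → Fin s),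
          ((⨂ₜ[ℂ] i, (c • loc ((σ p.1)⁻¹ • i) (fun f => p.2 (σ p.1 • f))))
            : ⨂[ℂ] _ : Fin (n+1), W)
          = ∑ β ∈ S, ⨂ₜ[ℂ] i, Loc i β := by
        refine Finset.sum_nbij' (fun p => fun f => e (p.2 f, (lam f)⁻¹ * p.1))
          (fun β => (Ql β (f0 0), A β)) ?_ ?_ ?_ ?_ ?_
        · intro p _
          refine Finset.mem_filter.mpr ⟨Finset.mem_univ _, ?_⟩
          intro f
          simp only [hQldef, Equiv.symm_apply_apply, mul_inv_cancel_left]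
        · intro β _; exact Finset.mem_univ _
        · intro p _
          refine Prod.ext ?_ ?_
          · simp only [hQldef, Equiv.symm_apply_apply, mul_inv_cancel_left]
          · funext f
            simp only [hAdef, Equiv.symm_apply_apply]
        · intro β hβ
          have hβS := (Finset.mem_filter.mp hβ).2
          funext f
          show e (A β f, (lam f)⁻¹ * Ql β (f0 0)) = β f
          rw [← hβS f]
          simp only [hAdef, hQldef, inv_mul_cancel_left]
          exact e.apply_symm_apply (β f)
        · intro p _
          congr 1
          funext i
          have hcnd : ∀ f, mem f i →
              Ql (fun f => e (p.2 f, (lam f)⁻¹ * p.1)) f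
              = Ql (fun f => e (p.2 f, (lam f)⁻¹ * p.1)) (f0 i) := by
            intro f _
            simp only [hQldef, Equiv.symm_apply_apply, mul_inv_cancel_left]
          have hq : Ql (fun f => e (p.2 f, (lam f)⁻¹ * p.1)) (f0 i) = p.1 := by
            simp only [hQldef, Equiv.symm_apply_apply, mul_inv_cancel_left]
          simp only [hLocdef]
          rw [dif_pos hcnd, hq]
          congr 1
          congr 1
          funext f
          simp only [hAdef, Equiv.symm_apply_apply]
      have hstep3 : ∑ p : (G ⧸ H) × (F → Fin s),
          ((⨂ₜ[ℂ] i, (c • loc ((σ p.1)⁻¹ • i) (fun f => p.2 (σ p.1 • f))))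
            : ⨂[ℂ] _ : Fin (n+1), W) = v := by
        rw [Fintype.sum_prod_type]
        have hin : ∀ q : G ⧸ H, ∑ a : F → Fin s,
            ((⨂ₜ[ℂ] i, (c • loc ((σ q)⁻¹ • i) (fun f => a (σ q • f))))
              : ⨂[ℂ] _ : Fin (n+1), W) = c ^ (n+1) • v := by
          intro q
          have hsm : ∀ a : F → Fin s,
              ((⨂ₜ[ℂ] i, (c • loc ((σ q)⁻¹ • i) (fun f => a (σ q • f))))
                : ⨂[ℂ] _ : Fin (n+1), W)
              = c ^ (n+1) • ⨂ₜ[ℂ] i, loc ((σ q)⁻¹ • i) (fun f => a (σ q • f)) := by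
            intro a
            have h6 := MultilinearMap.map_smul_univ
              (PiTensorProduct.tprod ℂ (s := fun _ : Fin (n+1) => W)) (fun _ => c)
              (fun i => loc ((σ q)⁻¹ • i) (fun f => a (σ q • f)))
            simpa [Finset.prod_const, Finset.card_univ] using h6
          rw [Finset.sum_congr rfl (fun a _ => hsm a), ← Finset.smul_sum, hA2 (σ q)]
        rw [Finset.sum_congr rfl (fun q _ => hin q), Finset.sum_const, Finset.card_univ,
          ← Nat.cast_smul_eq_nsmul ℂ, smul_smul, ← Nat.card_eq_fintype_card, hc,
          mul_inv_cancel₀ hcard0, one_smul]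
      exact (hstep3.symm).trans (hstep2.trans hstep1)
  calc ogSubRank (⊤ : Subgroup G) mem v ≤ ((t : ℕ) : ℕ∞) := key
    _ = (Nat.card (G ⧸ H) : ℕ∞) * (s : ℕ∞) := by rw [htdef]; push_cast; ring
    _ = (Nat.card (G ⧸ H) : ℕ∞) * ogSubRank H mem v := by rw [show ogSubRank H mem v = (s : ℕ∞) from hs]

/-- Let the finite group `G` act freely on the connected wsc `Ω`, and let `H` be a
normal subgroup of `G`. Then for every `G`-invariant `v`,
`rank_{(Ω,G)}(v) ≤ |G/H| · rank_{(Ω,H)}(v)`; in particular (taking `H = {e}`)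
`rank_{(Ω,G)}(v) ≤ |G| · rank_Ω(v)`. -/
theorem ogRank_le_index_mul_subgroup_rank
    {n : ℕ} {F : Type} [Fintype F] [DecidableEq F]
    {G : Type} [Group G] [Fintype G] [MulAction G (Fin (n+1))] [MulAction G F]
    (mem : F → Fin (n+1) → Prop)
    (hcompat : ∀ (g : G) (f : F) (i : Fin (n+1)), mem f i → mem (g • f) (g • i))
    (hfacet : ∀ f : F, ∃ i, mem f i)
    (hcover : ∀ i : Fin (n+1), ∃ f : F, mem f i)
    (hconn : ∀ i j : Fin (n+1),
      Relation.ReflTransGen (fun a b => ∃ f : F, mem f a ∧ mem f b) i j)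
    (hfree : ∀ (f : F) (g : G), g • f = f → g = 1)
    (H : Subgroup G) (hnormal : H.Normal)
    {W : Type} [AddCommGroup W] [Module ℂ W]
    (v : ⨂[ℂ] _ : Fin (n+1), W)
    (hinv : ∀ g : G, permuteFactors g v = v) :
    ogSubRank (⊤ : Subgroup G) mem v ≤ (Nat.card (G ⧸ H) : ℕ∞) * ogSubRank H mem v ∧
    ogSubRank (⊤ : Subgroup G) mem v ≤
      (Nat.card G : ℕ∞) * ogSubRank (⊥ : Subgroup G) mem v := by
  constructor
  · exact ogSubRank_top_le_aux mem hcompat hfacet hcover hconn hfree H hnormal v hinv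
  · have h := ogSubRank_top_le_aux mem hcompat hfacet hcover hconn hfree
      (⊥ : Subgroup G) inferInstance v hinv
    rwa [show Nat.card (G ⧸ (⊥ : Subgroup G)) = Nat.card G from
      Nat.card_congr (QuotientGroup.quotientBot (G := G)).toEquiv] at h
end

section
/- Let Ω be a connected wsc, m ∈ ℕ positive, and mΩ the wsc with all facet weights multiplied by m. Then for every v ∈ V: rank_{mΩ}(v) ≤ ⌈rank_Ω(v)^{1/m}⌉ and rank_Ω(v) ≤ rank_{mΩ}(v)^m. -/
open PiTensorProduct
open scoped TensorProduct

/-- An `Ω`-decomposition of `v` with index set `Fin s`, for the wsc with facet multiset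
`F` and membership relation `mem`: the local tensors depend only on the restriction of
the index function to the facets containing the given vertex, and sum to `v`. -/
def IsOmegaDecomposition {n : ℕ} {F : Type} [Fintype F] [DecidableEq F]
    (mem : F → Fin (n+1) → Prop)
    {V : Fin (n+1) → Type} [∀ i, AddCommGroup (V i)] [∀ i, Module ℂ (V i)]
    (s : ℕ) (loc : (i : Fin (n+1)) → (F → Fin s) → V i)
    (v : ⨂[ℂ] i, V i) : Prop :=
  (∀ (i : Fin (n+1)) (α α' : F → Fin s),
      (∀ f : F, mem f i → α f = α' f) → loc i α = loc i α') ∧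
    v = ∑ α : F → Fin s, ⨂ₜ[ℂ] i, loc i α

/-- The `Ω`-rank of `v`: the smallest cardinality of an index set over which `v` admits
an `Ω`-decomposition (`∞` if none exists). -/
noncomputable def omegaRank {n : ℕ} {F : Type} [Fintype F] [DecidableEq F]
    (mem : F → Fin (n+1) → Prop)
    {V : Fin (n+1) → Type} [∀ i, AddCommGroup (V i)] [∀ i, Module ℂ (V i)]
    (v : ⨂[ℂ] i, V i) : ℕ∞ :=
  sInf {r : ℕ∞ | ∃ s : ℕ, r = (s : ℕ∞) ∧
    ∃ loc : (i : Fin (n+1)) → (F → Fin s) → V i, IsOmegaDecomposition mem s loc v}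

/-- Transfer a decomposition for `mΩ` into one for `Ω` with index set `Fin (s^m)`. -/
lemma decomp_expand {n : ℕ} {F : Type} [Fintype F] [DecidableEq F]
    (mem : F → Fin (n+1) → Prop) (m s : ℕ)
    {V : Fin (n+1) → Type} [∀ i, AddCommGroup (V i)] [∀ i, Module ℂ (V i)]
    {v : ⨂[ℂ] i, V i}
    (loc : (i : Fin (n+1)) → (F × Fin m → Fin s) → V i)
    (h : IsOmegaDecomposition (fun p : F × Fin m => mem p.1) s loc v) :
    ∃ loc' : (i : Fin (n+1)) → (F → Fin (s^m)) → V i,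
      IsOmegaDecomposition mem (s^m) loc' v := by
  obtain ⟨hloc, hsum⟩ := h
  set e : (Fin m → Fin s) ≃ Fin (s ^ m) := finFunctionFinEquiv
  set E : (F → Fin (s^m)) ≃ (F × Fin m → Fin s) :=
    (Equiv.arrowCongr (Equiv.refl F) e.symm).trans (Equiv.curry F (Fin m) (Fin s)).symm
    with hE
  have hEval : ∀ (α : F → Fin (s^m)) (p : F × Fin m), E α p = e.symm (α p.1) p.2 := by
    intro α p; rfl
  refine ⟨fun i α => loc i (E α), ?_, ?_⟩
  · intro i α α' hagree
    refine hloc i _ _ ?_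
    intro p hp
    rw [hEval, hEval, hagree p.1 hp]
  · rw [hsum]
    exact (E.sum_comp (fun β => ⨂ₜ[ℂ] i, loc i β)).symm

/-- Transfer a decomposition for `Ω` with index set `Fin s'`, `s' ≤ s^m`,
into one for `mΩ` with index set `Fin s`. -/
lemma decomp_contract {n : ℕ} {F : Type} [Fintype F] [DecidableEq F]
    (mem : F → Fin (n+1) → Prop)
    (hfacet : ∀ f : F, ∃ i, mem f i)
    (m s s' : ℕ) (ι : Fin s' ↪ (Fin m → Fin s))
    {V : Fin (n+1) → Type} [∀ i, AddCommGroup (V i)] [∀ i, Module ℂ (V i)]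
    {v : ⨂[ℂ] i, V i}
    (loc : (i : Fin (n+1)) → (F → Fin s') → V i)
    (h : IsOmegaDecomposition mem s' loc v) :
    ∃ loc' : (i : Fin (n+1)) → (F × Fin m → Fin s) → V i,
      IsOmegaDecomposition (fun p : F × Fin m => mem p.1) s loc' v := by
  classical
  obtain ⟨hloc, hsum⟩ := h
  set good : Fin (n+1) → (F × Fin m → Fin s) → Prop :=
    fun i β => ∃ α : F → Fin s', ∀ f : F, mem f i → (fun k => β (f, k)) = ι (α f)
    with hgood
  set loc' : (i : Fin (n+1)) → (F × Fin m → Fin s) → V i :=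
    fun i β => if hb : good i β then loc i hb.choose else 0 with hloc'
  have key : ∀ (i : Fin (n+1)) (β : F × Fin m → Fin s) (hb : good i β)
      (α : F → Fin s'), (∀ f : F, mem f i → (fun k => β (f, k)) = ι (α f)) →
      loc' i β = loc i α := by
    intro i β hb α hα
    have : loc' i β = loc i hb.choose := dif_pos hb
    rw [this]
    refine hloc i _ _ ?_
    intro f hf
    have h1 := hb.choose_spec f hf
    have h2 := hα f hf
    exact ι.injective (h1.symm.trans h2)
  refine ⟨loc', ?_, ?_⟩
  · -- locality
    intro i β β' hagree
    by_cases hb : good i β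
    · obtain ⟨α, hα⟩ := hb
      have hα' : ∀ f : F, mem f i → (fun k => β' (f, k)) = ι (α f) := by
        intro f hf
        rw [← hα f hf]
        funext k
        exact (hagree (f, k) hf).symm
      rw [key i β ⟨α, hα⟩ α hα, key i β' ⟨α, hα'⟩ α hα']
    · have hb' : ¬ good i β' := by
        intro ⟨α, hα⟩
        refine hb ⟨α, ?_⟩
        intro f hf
        rw [← hα f hf]
        funext k
        exact hagree (f, k) hf
      rw [hloc']
      simp only [dif_neg hb, dif_neg hb']
  · -- sum
    rw [hsum]
    set g : (F → Fin s') → (F × Fin m → Fin s) := fun α p => ι (α p.1) p.2 with hg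
    have hginj : Function.Injective g := by
      intro α α' hαα
      funext f
      refine ι.injective ?_
      funext k
      exact congrFun hαα (f, k)
    have hzero : ∀ β : F × Fin m → Fin s, β ∉ Finset.univ.image g →
        (⨂ₜ[ℂ] i, loc' i β) = 0 := by
      intro β hβ
      have hnr : ∃ f₀ : F, (fun k => β (f₀, k)) ∉ Set.range ι := by
        by_contra hc
        push_neg at hc
        choose α hα using hc
        refine hβ (Finset.mem_image.2 ⟨α, Finset.mem_univ _, ?_⟩)
        funext p
        exact congrFun (hα p.1) p.2
      obtain ⟨f₀, hf₀⟩ := hnr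
      obtain ⟨i₀, hi₀⟩ := hfacet f₀
      have hz : loc' i₀ β = 0 := by
        rw [hloc']
        refine dif_neg ?_
        intro ⟨α, hα⟩
        exact hf₀ ⟨α f₀, (hα f₀ hi₀).symm⟩
      exact MultilinearMap.map_coord_zero _ i₀ hz
    have him : ∀ α : F → Fin s', (⨂ₜ[ℂ] i, loc' i (g α)) = ⨂ₜ[ℂ] i, loc i α := by
      intro α
      congr 1
      funext i
      refine key i (g α) ⟨α, fun f _ => rfl⟩ α (fun f _ => rfl)
    have A : (∑ α : F → Fin s', ⨂ₜ[ℂ] i, loc i α)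
        = ∑ α : F → Fin s', ⨂ₜ[ℂ] i, loc' i (g α) :=
      Finset.sum_congr rfl (fun α _ => (him α).symm)
    have C : (∑ β ∈ Finset.univ.image g, ⨂ₜ[ℂ] i, loc' i β)
        = ∑ α : F → Fin s', ⨂ₜ[ℂ] i, loc' i (g α) :=
      Finset.sum_image (fun a _ b _ hab => hginj hab)
    have B : (∑ β ∈ Finset.univ.image g, ⨂ₜ[ℂ] i, loc' i β)
        = ∑ β : F × Fin m → Fin s, ⨂ₜ[ℂ] i, loc' i β := by
      refine Finset.sum_subset (Finset.subset_univ _) ?_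
      intro β _ hβ
      exact hzero β hβ
    rw [A, ← C, B]

/-- Let `Ω` be a connected wsc and `m ≥ 1`. The wsc `mΩ` has the same simplices but all
facet weights multiplied by `m`, so its facet multiset is `F × Fin m` with the membership
relation ignoring the second component. Then for every `v ∈ V`:
`rank_{mΩ}(v) ≤ ⌈rank_Ω(v)^{1/m}⌉` (expressed as: `rank_{mΩ}(v) ≤ s` for every natural
number `s` with `rank_Ω(v) ≤ s^m`) and `rank_Ω(v) ≤ rank_{mΩ}(v)^m`. -/
theorem omegaRank_replicated_facets
    {n : ℕ} {F : Type} [Fintype F] [DecidableEq F]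
    (mem : F → Fin (n+1) → Prop)
    (hfacet : ∀ f : F, ∃ i, mem f i)
    (hcover : ∀ i : Fin (n+1), ∃ f : F, mem f i)
    (hconn : ∀ i j : Fin (n+1),
      Relation.ReflTransGen (fun a b => ∃ f : F, mem f a ∧ mem f b) i j)
    (m : ℕ) (hm : 0 < m)
    {V : Fin (n+1) → Type} [∀ i, AddCommGroup (V i)] [∀ i, Module ℂ (V i)]
    (v : ⨂[ℂ] i, V i) :
    (∀ s : ℕ, omegaRank mem v ≤ ((s : ℕ∞)) ^ m →
        omegaRank (fun p : F × Fin m => mem p.1) v ≤ (s : ℕ∞)) ∧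
      omegaRank mem v ≤ (omegaRank (fun p : F × Fin m => mem p.1) v) ^ m := by
  classical
  constructor
  · intro s hs
    -- the set defining `omegaRank mem v` is nonempty
    set S : Set ℕ∞ := {r : ℕ∞ | ∃ s : ℕ, r = (s : ℕ∞) ∧
      ∃ loc : (i : Fin (n+1)) → (F → Fin s) → V i, IsOmegaDecomposition mem s loc v}
    have hSne : S.Nonempty := by
      by_contra hc
      rw [Set.not_nonempty_iff_eq_empty] at hc
      have : omegaRank mem v = ⊤ := by
        rw [omegaRank]; rw [show {r : ℕ∞ | ∃ s : ℕ, r = (s : ℕ∞) ∧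
          ∃ loc : (i : Fin (n+1)) → (F → Fin s) → V i,
            IsOmegaDecomposition mem s loc v} = S from rfl, hc, sInf_empty]
      rw [this] at hs
      have : ((s : ℕ∞)) ^ m = ((s ^ m : ℕ) : ℕ∞) := by push_cast; ring
      rw [this] at hs
      exact (ENat.coe_lt_top (s ^ m)).not_ge hs
    have hmem : sInf S ∈ S := csInf_mem hSne
    obtain ⟨s', hs', loc, hdec⟩ := hmem
    have hrank : omegaRank mem v = (s' : ℕ∞) := hs' ▸ rfl
    have hle : (s' : ℕ) ≤ s ^ m := by
      rw [hrank] at hs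
      have : ((s : ℕ∞)) ^ m = ((s ^ m : ℕ) : ℕ∞) := by push_cast; ring
      rw [this] at hs
      exact_mod_cast hs
    have hcard : (s' : ℕ) ≤ Fintype.card (Fin m → Fin s) := by
      simpa [Fintype.card_fun] using hle
    obtain ⟨ι⟩ : Nonempty (Fin s' ↪ (Fin m → Fin s)) := by
      have : Nonempty (Fin s' ↪ Fin (s ^ m)) :=
        ⟨(Fin.castLEEmb hle)⟩
      obtain ⟨ι₀⟩ := this
      exact ⟨ι₀.trans finFunctionFinEquiv.symm.toEmbedding⟩
    obtain ⟨loc', hdec'⟩ := decomp_contract mem hfacet m s s' ι loc hdec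
    exact sInf_le ⟨s, rfl, loc', hdec'⟩
  · -- second inequality
    set S' : Set ℕ∞ := {r : ℕ∞ | ∃ s : ℕ, r = (s : ℕ∞) ∧
      ∃ loc : (i : Fin (n+1)) → (F × Fin m → Fin s) → V i,
        IsOmegaDecomposition (fun p : F × Fin m => mem p.1) s loc v}
    by_cases hS' : S'.Nonempty
    · have hmem : sInf S' ∈ S' := csInf_mem hS'
      obtain ⟨s, hs, loc, hdec⟩ := hmem
      obtain ⟨loc', hdec'⟩ := decomp_expand mem m s loc hdec
      have h1 : omegaRank mem v ≤ ((s ^ m : ℕ) : ℕ∞) :=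
        sInf_le ⟨s ^ m, rfl, loc', hdec'⟩
      have h2 : omegaRank (fun p : F × Fin m => mem p.1) v = (s : ℕ∞) := hs ▸ rfl
      rw [h2]
      refine h1.trans_eq ?_
      push_cast; ring
    · rw [Set.not_nonempty_iff_eq_empty] at hS'
      have : omegaRank (fun p : F × Fin m => mem p.1) v = ⊤ := by
        rw [omegaRank]; rw [show {r : ℕ∞ | ∃ s : ℕ, r = (s : ℕ∞) ∧
          ∃ loc : (i : Fin (n+1)) → (F × Fin m → Fin s) → V i,
            IsOmegaDecomposition (fun p : F × Fin m => mem p.1) s loc v} = S' from rfl,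
          hS', sInf_empty]
      rw [this, ENat.top_pow hm.ne']
      exact le_top
end

section
/- Let G act on the connected wsc Ω, let M ∈ ℂ^{d₀} ⊗ ⋯ ⊗ ℂ^{dₙ}, and let σ be the associated diagonal tensor in Mat_{d₀}(ℂ) ⊗ ⋯ ⊗ Mat_{dₙ}(ℂ). Then rank_{(Ω,G)}(M) = rank_{(Ω,G)}(σ), and the nonnegative (Ω,G)-rank of M equals the separable (Ω,G)-rank of σ. -/
open PiTensorProduct
open scoped TensorProduct ComplexOrder

/-- An `(Ω,G)`-decomposition of `v` with index set `Fin s` whose local vectors all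
satisfy the constraint `P` (e.g. `P = True` for a plain decomposition, entrywise
nonnegativity for a nonnegative decomposition, positive semidefiniteness for a
separable decomposition). -/
def IsOGDecompositionWith {n : ℕ} {F : Type} [Fintype F] [DecidableEq F]
    (G : Type) [Group G] [MulAction G (Fin (n+1))] [MulAction G F]
    (mem : F → Fin (n+1) → Prop)
    {W : Type} [AddCommGroup W] [Module ℂ W] (P : W → Prop)
    (s : ℕ) (loc : Fin (n+1) → (F → Fin s) → W)
    (v : ⨂[ℂ] _ : Fin (n+1), W) : Prop :=
  (∀ (i : Fin (n+1)) (α α' : F → Fin s),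
      (∀ f : F, mem f i → α f = α' f) → loc i α = loc i α') ∧
  (∀ (g : G) (i : Fin (n+1)) (α : F → Fin s),
      loc (g • i) (fun f => α (g⁻¹ • f)) = loc i α) ∧
  (∀ (i : Fin (n+1)) (α : F → Fin s), P (loc i α)) ∧
  v = ∑ α : F → Fin s, ⨂ₜ[ℂ] i, loc i α

/-- The minimal index-set cardinality among `(Ω,G)`-decompositions of `v` whose local
vectors satisfy `P` (`∞` if none exists). -/
noncomputable def ogRankWith {n : ℕ} {F : Type} [Fintype F] [DecidableEq F]
    (G : Type) [Group G] [MulAction G (Fin (n+1))] [MulAction G F]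
    (mem : F → Fin (n+1) → Prop)
    {W : Type} [AddCommGroup W] [Module ℂ W] (P : W → Prop)
    (v : ⨂[ℂ] _ : Fin (n+1), W) : ℕ∞ :=
  sInf {r : ℕ∞ | ∃ s : ℕ, r = (s : ℕ∞) ∧
    ∃ loc : Fin (n+1) → (F → Fin s) → W, IsOGDecompositionWith G mem P s loc v}

/-- Pushing forward a decomposition along a linear map. -/
lemma IsOGDecompositionWith.map {n : ℕ} {F : Type} [Fintype F] [DecidableEq F]
    {G : Type} [Group G] [MulAction G (Fin (n+1))] [MulAction G F]
    {mem : F → Fin (n+1) → Prop}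
    {W W' : Type} [AddCommGroup W] [Module ℂ W] [AddCommGroup W'] [Module ℂ W']
    {P : W → Prop} {P' : W' → Prop} (L : W →ₗ[ℂ] W') (hP : ∀ w, P w → P' (L w))
    {s : ℕ} {loc : Fin (n+1) → (F → Fin s) → W} {v : ⨂[ℂ] _ : Fin (n+1), W}
    (h : IsOGDecompositionWith G mem P s loc v) :
    IsOGDecompositionWith G mem P' s (fun i α => L (loc i α))
      (PiTensorProduct.map (fun _ => L) v) := by
  obtain ⟨h1, h2, h3, h4⟩ := h
  refine ⟨fun i α α' hα => congrArg L (h1 i α α' hα),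
    fun g i α => congrArg L (h2 g i α),
    fun i α => hP _ (h3 i α), ?_⟩
  rw [h4, map_sum]
  exact Finset.sum_congr rfl fun α _ => PiTensorProduct.map_tprod _ _

lemma ogRankWith_le_map {n : ℕ} {F : Type} [Fintype F] [DecidableEq F]
    (G : Type) [Group G] [MulAction G (Fin (n+1))] [MulAction G F]
    (mem : F → Fin (n+1) → Prop)
    {W W' : Type} [AddCommGroup W] [Module ℂ W] [AddCommGroup W'] [Module ℂ W']
    {P : W → Prop} {P' : W' → Prop} (L : W →ₗ[ℂ] W') (hP : ∀ w, P w → P' (L w))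
    (v : ⨂[ℂ] _ : Fin (n+1), W) :
    ogRankWith G mem P' (PiTensorProduct.map (fun _ => L) v) ≤ ogRankWith G mem P v := by
  refine sInf_le_sInf ?_
  rintro r ⟨s, rfl, loc, h⟩
  exact ⟨s, rfl, fun i α => L (loc i α), h.map L hP⟩

lemma diagonal_single {d : ℕ} (j : Fin d) :
    (Matrix.diagonal (Pi.single j 1) : Matrix (Fin d) (Fin d) ℂ) =
      Matrix.single j j 1 := by
  ext a b
  by_cases h : a = b <;> by_cases h2 : j = a <;>
    simp [Matrix.diagonal_apply, Matrix.single, Pi.single_apply, h, h2] <;> aesop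

lemma diag_stdBasisMatrix {d : ℕ} (j : Fin d) :
    (Matrix.single j j 1 : Matrix (Fin d) (Fin d) ℂ).diag = Pi.single j 1 := by
  ext k
  by_cases h : j = k <;> simp [Matrix.diag, Matrix.single, Pi.single_apply, h] <;> aesop

/-- Let `G` act on the connected wsc `Ω`, let `M ∈ ℂ^d ⊗ ⋯ ⊗ ℂ^d` have coefficients
`m_{i₀…iₙ}` and let `σ = Σ m_{i₀…iₙ} E_{i₀i₀} ⊗ ⋯ ⊗ E_{iₙiₙ}` be the associated
diagonal tensor in `Mat_d(ℂ) ⊗ ⋯ ⊗ Mat_d(ℂ)`. Then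
`rank_{(Ω,G)}(M) = rank_{(Ω,G)}(σ)`, and the nonnegative `(Ω,G)`-rank of `M` (all local
vectors entrywise nonnegative) equals the separable `(Ω,G)`-rank of `σ` (all local
matrices positive semidefinite). -/
theorem ogRank_and_nnRank_correspondence
    {n : ℕ} {F : Type} [Fintype F] [DecidableEq F]
    (G : Type) [Group G] [MulAction G (Fin (n+1))] [MulAction G F]
    (mem : F → Fin (n+1) → Prop)
    (hcompat : ∀ (g : G) (f : F) (i : Fin (n+1)), mem f i → mem (g • f) (g • i))
    (hfacet : ∀ f : F, ∃ i, mem f i)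
    (hcover : ∀ i : Fin (n+1), ∃ f : F, mem f i)
    (hconn : ∀ i j : Fin (n+1),
      Relation.ReflTransGen (fun a b => ∃ f : F, mem f a ∧ mem f b) i j)
    (d : ℕ) (m : (Fin (n+1) → Fin d) → ℂ)
    (M : ⨂[ℂ] _ : Fin (n+1), (Fin d → ℂ))
    (hM : M = ∑ idx : Fin (n+1) → Fin d,
      m idx • ⨂ₜ[ℂ] i, (Pi.single (idx i) 1 : Fin d → ℂ))
    (σ : ⨂[ℂ] _ : Fin (n+1), Matrix (Fin d) (Fin d) ℂ)
    (hσ : σ = ∑ idx : Fin (n+1) → Fin d,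
      m idx • ⨂ₜ[ℂ] i, (Matrix.single (idx i) (idx i) 1 : Matrix (Fin d) (Fin d) ℂ)) :
    ogRankWith G mem (fun _ => True) M = ogRankWith G mem (fun _ => True) σ ∧
    ogRankWith G mem (fun w : Fin d → ℂ => ∀ k, 0 ≤ w k) M =
      ogRankWith G mem (fun A : Matrix (Fin d) (Fin d) ℂ => A.PosSemidef) σ := by
  set Dg : (Fin d → ℂ) →ₗ[ℂ] Matrix (Fin d) (Fin d) ℂ :=
    Matrix.diagonalLinearMap (Fin d) ℂ ℂ with hDg
  set Dx : Matrix (Fin d) (Fin d) ℂ →ₗ[ℂ] (Fin d → ℂ) :=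
    Matrix.diagLinearMap (Fin d) ℂ ℂ with hDx
  have hMσ : PiTensorProduct.map (fun _ : Fin (n+1) => Dg) M = σ := by
    rw [hM, hσ, map_sum]
    refine Finset.sum_congr rfl fun idx _ => ?_
    rw [map_smul, PiTensorProduct.map_tprod]
    congr 1
    refine congrArg (PiTensorProduct.tprod ℂ) (funext fun i => ?_)
    show Matrix.diagonal (Pi.single (idx i) 1) = _
    exact diagonal_single (idx i)
  have hσM : PiTensorProduct.map (fun _ : Fin (n+1) => Dx) σ = M := by
    rw [hM, hσ, map_sum]
    refine Finset.sum_congr rfl fun idx _ => ?_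
    rw [map_smul, PiTensorProduct.map_tprod]
    congr 1
    refine congrArg (PiTensorProduct.tprod ℂ) (funext fun i => ?_)
    show (Matrix.single (idx i) (idx i) 1 : Matrix (Fin d) (Fin d) ℂ).diag = _
    exact diag_stdBasisMatrix (idx i)
  constructor
  · apply le_antisymm
    · calc ogRankWith G mem (fun _ => True) M
          = ogRankWith G mem (fun _ => True)
            (PiTensorProduct.map (fun _ : Fin (n+1) => Dx) σ) := by rw [hσM]
        _ ≤ ogRankWith G mem (fun _ => True) σ :=
            ogRankWith_le_map G mem Dx (fun _ _ => trivial) σ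
    · calc ogRankWith G mem (fun _ => True) σ
          = ogRankWith G mem (fun _ => True)
            (PiTensorProduct.map (fun _ : Fin (n+1) => Dg) M) := by rw [hMσ]
        _ ≤ ogRankWith G mem (fun _ => True) M :=
            ogRankWith_le_map G mem Dg (fun _ _ => trivial) M
  · apply le_antisymm
    · calc ogRankWith G mem (fun w : Fin d → ℂ => ∀ k, 0 ≤ w k) M
          = ogRankWith G mem (fun w : Fin d → ℂ => ∀ k, 0 ≤ w k)
            (PiTensorProduct.map (fun _ : Fin (n+1) => Dx) σ) := by rw [hσM]
        _ ≤ ogRankWith G mem (fun A : Matrix (Fin d) (Fin d) ℂ => A.PosSemidef) σ := by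
            refine ogRankWith_le_map G mem Dx (fun A hA k => ?_) σ
            exact hA.diag_nonneg (i := k)
    · calc ogRankWith G mem (fun A : Matrix (Fin d) (Fin d) ℂ => A.PosSemidef) σ
          = ogRankWith G mem (fun A : Matrix (Fin d) (Fin d) ℂ => A.PosSemidef)
            (PiTensorProduct.map (fun _ : Fin (n+1) => Dg) M) := by rw [hMσ]
        _ ≤ ogRankWith G mem (fun w : Fin d → ℂ => ∀ k, 0 ≤ w k) M := by
            refine ogRankWith_le_map G mem Dg (fun w hw => ?_) M
            exact Matrix.PosSemidef.diagonal hw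
end
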